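/- arXiv:1605.02885 — 2 statements merged into one kernel-verified Lean document; each statement's English description precedes it below -/
import Mathlib

section
/- Setting x_k = Sᵢ/e^{Hᵢ} for all 1 ≤ k ≤ i−1 simultaneously makes all partial derivatives ∂H(M)/∂x_k vanish. -/
open Finset

noncomputable def pentropy {ι : Type*} [Fintype ι] (ℓ : ι → ℝ) : ℝ :=
  -∑ i, (ℓ i / ∑ j, ℓ j) * Real.log (ℓ i / ∑ j, ℓ j)

lemma pentropy_eq {ι : Type*} [Fintype ι] (f : ι → ℝ) (hf : ∀ i, 0 < f i)
    (hT : 0 < ∑ i, f i) :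
    pentropy f = Real.log (∑ i, f i) - (∑ i, f i * Real.log (f i)) / (∑ i, f i) := by
  have hT' : (∑ i, f i) ≠ 0 := hT.ne'
  unfold pentropy
  have h1 : ∀ i : ι, (f i / ∑ j, f j) * Real.log (f i / ∑ j, f j)
      = (f i * Real.log (f i)) / (∑ j, f j) - (f i / ∑ j, f j) * Real.log (∑ j, f j) := by
    intro i
    rw [Real.log_div (hf i).ne' hT']
    ring
  rw [Finset.sum_congr rfl fun i _ => h1 i, Finset.sum_sub_distrib, ← Finset.sum_div,
    ← Finset.sum_mul, ← Finset.sum_div, div_self hT', one_mul]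
  ring


/-- At the point where every free bar equals `g = Sᵢ/e^{Hᵢ}`, all partial
derivatives of the entropy vanish. -/
theorem partial_derivatives_vanish (m k : ℕ) (hk : 0 < k)
    (ℓ : Fin k → ℝ) (hℓ : ∀ j, 0 < ℓ j) (k' : Fin m) :
    HasDerivAt
      (fun y : ℝ => pentropy (Sum.elim
        (Function.update (fun _ : Fin m => (∑ j, ℓ j) / Real.exp (pentropy ℓ)) k' y) ℓ))
      0 ((∑ j, ℓ j) / Real.exp (pentropy ℓ)) := by
  haveI : Nonempty (Fin k) := ⟨⟨0, hk⟩⟩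
  set S : ℝ := ∑ j, ℓ j with hS
  have hSpos : 0 < S := Finset.sum_pos (fun j _ => hℓ j) Finset.univ_nonempty
  set g : ℝ := S / Real.exp (pentropy ℓ) with hg
  have hgpos : 0 < g := div_pos hSpos (Real.exp_pos _)
  set L : ℝ := ∑ j, ℓ j * Real.log (ℓ j) with hL
  have hlogg : Real.log g = L / S := by
    rw [hg, Real.log_div hSpos.ne' (Real.exp_pos _).ne', Real.log_exp,
      pentropy_eq ℓ hℓ hSpos]
    ring
  set e : ℝ := ((Finset.univ.erase k').card : ℝ) with he
  set c : ℝ := e * g + S with hc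
  set d : ℝ := e * (g * Real.log g) + L with hd
  have hcpos : 0 < c := by
    have : (0:ℝ) ≤ e * g := mul_nonneg (Nat.cast_nonneg _) hgpos.le
    linarith
  -- the function agrees with F y = log (y + c) - (y log y + d) / (y + c) near g
  have key : ∀ y : ℝ, 0 < y →
      pentropy (Sum.elim (Function.update (fun _ : Fin m => g) k' y) ℓ)
        = Real.log (y + c) - (y * Real.log y + d) / (y + c) := by
    intro y hy
    set f : Fin m ⊕ Fin k → ℝ := Sum.elim (Function.update (fun _ : Fin m => g) k' y) ℓ
      with hf
    have hfpos : ∀ i, 0 < f i := by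
      rintro (i | j)
      · simp only [hf, Sum.elim_inl]
        rcases eq_or_ne i k' with rfl | h
        · simpa using hy
        · simp [Function.update_of_ne h, hgpos]
      · exact hℓ j
    have hsum1 : (∑ i, f i) = y + c := by
      rw [hf, Fintype.sum_sum_type]
      simp only [Sum.elim_inl, Sum.elim_inr]
      rw [Finset.sum_update_of_mem (Finset.mem_univ k')]
      simp only [Finset.sum_const, nsmul_eq_mul]
      rw [hc, he]
      rw [Finset.sdiff_singleton_eq_erase]
      ring
    have hupd : (fun i : Fin m => Function.update (fun _ : Fin m => g) k' y i *
        Real.log (Function.update (fun _ : Fin m => g) k' y i))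
        = Function.update (fun _ : Fin m => g * Real.log g) k' (y * Real.log y) := by
      funext i
      exact Function.apply_update (fun _ x => x * Real.log x) (fun _ => g) k' y i
    have hsum2 : (∑ i, f i * Real.log (f i)) = y * Real.log y + d := by
      rw [hf, Fintype.sum_sum_type]
      simp only [Sum.elim_inl, Sum.elim_inr]
      rw [hupd, Finset.sum_update_of_mem (Finset.mem_univ k')]
      simp only [Finset.sum_const, nsmul_eq_mul]
      rw [hd, he, Finset.sdiff_singleton_eq_erase]
      ring
    have hTpos : 0 < ∑ i, f i := by rw [hsum1]; linarith
    rw [pentropy_eq f hfpos hTpos, hsum1, hsum2]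
  have hgc : 0 < g + c := by linarith
  -- derivative of F at g
  have hF : HasDerivAt (fun y : ℝ => Real.log (y + c) - (y * Real.log y + d) / (y + c))
      (1 / (g + c) - ((Real.log g + 1) * (g + c) - (g * Real.log g + d) * 1) / (g + c) ^ 2)
      g := by
    have h1 : HasDerivAt (fun y : ℝ => y + c) 1 g := (hasDerivAt_id g).add_const c
    have hlog : HasDerivAt (fun y : ℝ => Real.log (y + c)) (1 / (g + c)) g := by
      simpa using h1.log hgc.ne'
    have hnum : HasDerivAt (fun y : ℝ => y * Real.log y + d) (Real.log g + 1) g :=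
      (Real.hasDerivAt_mul_log hgpos.ne').add_const d
    exact hlog.sub (hnum.div h1 hgc.ne')
  have hderiv0 : (1 / (g + c) - ((Real.log g + 1) * (g + c) - (g * Real.log g + d) * 1)
      / (g + c) ^ 2) = 0 := by
    have hdc : d = c * Real.log g := by
      rw [hd, hc, hlogg]
      field_simp
    rw [hdc]
    field_simp
    ring
  rw [← hderiv0]
  apply hF.congr_of_eventuallyEq
  have : Set.Ioi (0:ℝ) ∈ nhds g := Ioi_mem_nhds hgpos
  filter_upwards [this] with y hy
  exact key y hy
end

section
/- Concavity at the optimum: the function (x₁,…,x_{i-1}) ↦ H(x₁,…,x_{i-1},ℓᵢ,…,ℓₙ) on the positive orthant attains a global maximum (not merely a critical point) at x₁ = ⋯ = x_{i-1} = Sᵢ/e^{Hᵢ}, and the maximum value is strictly greater than H at any other point of the orthant. -/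
open Finset

private lemma gibbs {ι : Type*} [Fintype ι] (p q : ι → ℝ)
    (hp : ∀ i, 0 < p i) (hq : ∀ i, 0 < q i)
    (hps : ∑ i, p i = 1) (hqs : ∑ i, q i = 1) (hne : p ≠ q) :
    -∑ i, p i * Real.log (p i) < -∑ i, p i * Real.log (q i) := by
  obtain ⟨i₀, hi₀⟩ := Function.ne_iff.mp hne
  have hle : ∀ i, p i * Real.log (q i) - p i * Real.log (p i) ≤ q i - p i := by
    intro i
    have h1 : Real.log (q i / p i) ≤ q i / p i - 1 :=
      Real.log_le_sub_one_of_pos (div_pos (hq i) (hp i))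
    have h2 := mul_le_mul_of_nonneg_left h1 (hp i).le
    rw [Real.log_div (hq i).ne' (hp i).ne'] at h2
    calc p i * Real.log (q i) - p i * Real.log (p i)
        = p i * (Real.log (q i) - Real.log (p i)) := by ring
      _ ≤ p i * (q i / p i - 1) := h2
      _ = q i - p i := by field_simp [(hp i).ne']
  have hlt : p i₀ * Real.log (q i₀) - p i₀ * Real.log (p i₀) < q i₀ - p i₀ := by
    have hne1 : q i₀ / p i₀ ≠ 1 := by
      intro h
      exact hi₀ ((div_eq_one_iff_eq (hp i₀).ne').mp h).symm
    have h1 : Real.log (q i₀ / p i₀) < q i₀ / p i₀ - 1 :=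
      Real.log_lt_sub_one_of_pos (div_pos (hq i₀) (hp i₀)) hne1
    have h2 := mul_lt_mul_of_pos_left h1 (hp i₀)
    rw [Real.log_div (hq i₀).ne' (hp i₀).ne'] at h2
    calc p i₀ * Real.log (q i₀) - p i₀ * Real.log (p i₀)
        = p i₀ * (Real.log (q i₀) - Real.log (p i₀)) := by ring
      _ < p i₀ * (q i₀ / p i₀ - 1) := h2
      _ = q i₀ - p i₀ := by field_simp [(hp i₀).ne']
  have hsum : ∑ i, (p i * Real.log (q i) - p i * Real.log (p i)) < ∑ i, (q i - p i) :=
    Finset.sum_lt_sum (fun i _ => hle i) ⟨i₀, Finset.mem_univ _, hlt⟩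
  rw [Finset.sum_sub_distrib, Finset.sum_sub_distrib, hps, hqs] at hsum
  linarith

/-- The constant point `x = g` is the strict global maximum of
`(x₁,…,x_{i-1}) ↦ H(x,ℓ)` on the positive orthant (here `m = i-1 ≥ 1`). -/
theorem entropy_strict_global_max (m k : ℕ) (hm : 0 < m) (hk : 0 < k)
    (ℓ : Fin k → ℝ) (hℓ : ∀ j, 0 < ℓ j)
    (x : Fin m → ℝ) (hx : ∀ j, 0 < x j)
    (hne : x ≠ fun _ => (∑ j, ℓ j) / Real.exp (pentropy ℓ)) :
    pentropy (Sum.elim x ℓ) <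
      pentropy (Sum.elim (fun _ : Fin m => (∑ j, ℓ j) / Real.exp (pentropy ℓ)) ℓ) := by
  have hS : 0 < ∑ j, ℓ j := Finset.sum_pos (fun j _ => hℓ j) ⟨⟨0, hk⟩, Finset.mem_univ _⟩
  set S := ∑ j, ℓ j with hSdef
  set g := S / Real.exp (pentropy ℓ) with hgdef
  have hg : 0 < g := div_pos hS (Real.exp_pos _)
  -- A = S * log g
  have hA : ∑ j, ℓ j * Real.log (ℓ j) = S * Real.log g := by
    have hH : pentropy ℓ = Real.log S - (∑ j, ℓ j * Real.log (ℓ j)) / S := by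
      have e1 : ∀ j ∈ Finset.univ, (ℓ j / S) * Real.log (ℓ j / S)
          = (ℓ j * Real.log (ℓ j)) / S - (ℓ j / S) * Real.log S := by
        intro j _
        rw [Real.log_div (hℓ j).ne' hS.ne']
        ring
      simp only [pentropy, ← hSdef]
      rw [Finset.sum_congr rfl e1, Finset.sum_sub_distrib, ← Finset.sum_div,
        ← Finset.sum_mul, ← Finset.sum_div, ← hSdef, div_self hS.ne']
      ring
    have hlg : Real.log g = Real.log S - pentropy ℓ := by
      rw [hgdef, Real.log_div hS.ne' (Real.exp_pos _).ne', Real.log_exp]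
    rw [hlg, hH, sub_sub_cancel, mul_div_cancel₀ _ hS.ne']
  -- totals
  set X := ∑ j, x j with hXdef
  have hX : 0 < X := Finset.sum_pos (fun j _ => hx j) ⟨⟨0, hm⟩, Finset.mem_univ _⟩
  have hT : ∑ i, Sum.elim x ℓ i = X + S := by
    rw [Fintype.sum_sum_type]; simp [hXdef, hSdef]
  have hTs : ∑ i, Sum.elim (fun _ : Fin m => g) ℓ i = (m : ℝ) * g + S := by
    rw [Fintype.sum_sum_type]
    simp [Finset.sum_const, Finset.card_univ, nsmul_eq_mul, hSdef]
  have hTpos : 0 < X + S := by linarith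
  have hTspos : 0 < (m : ℝ) * g + S := by positivity
  set p : Fin m ⊕ Fin k → ℝ := fun i => Sum.elim x ℓ i / (X + S) with hpdef
  set q : Fin m ⊕ Fin k → ℝ := fun i => Sum.elim (fun _ : Fin m => g) ℓ i / ((m : ℝ) * g + S)
    with hqdef
  have hppos : ∀ i, 0 < p i := by
    intro i
    apply div_pos _ hTpos
    cases i with
    | inl a => exact hx a
    | inr b => exact hℓ b
  have hqpos : ∀ i, 0 < q i := by
    intro i
    apply div_pos _ hTspos
    cases i with
    | inl a => exact hg
    | inr b => exact hℓ b
  have hps : ∑ i, p i = 1 := by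
    simp only [hpdef, ← Finset.sum_div, hT, div_self hTpos.ne']
  have hqs : ∑ i, q i = 1 := by
    simp only [hqdef, ← Finset.sum_div, hTs, div_self hTspos.ne']
  have hpq : p ≠ q := by
    intro h
    have hTT : X + S = (m : ℝ) * g + S := by
      have h0 := congrFun h (Sum.inr ⟨0, hk⟩)
      simp only [hpdef, hqdef, Sum.elim_inr] at h0
      have := (div_eq_div_iff hTpos.ne' hTspos.ne').mp h0
      exact (mul_left_cancel₀ (hℓ ⟨0, hk⟩).ne' this).symm
    apply hne
    funext j
    have h0 := congrFun h (Sum.inl j)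
    simp only [hpdef, hqdef, Sum.elim_inl, hTT] at h0
    have := (div_eq_div_iff hTspos.ne' hTspos.ne').mp h0
    exact mul_right_cancel₀ hTspos.ne' this
  -- the LHS is -∑ p log p
  have hLHS : pentropy (Sum.elim x ℓ) = -∑ i, p i * Real.log (p i) := by
    simp only [pentropy, hT, hpdef]
  -- key sum over ℓ part
  set L := Real.log (g / ((m : ℝ) * g + S)) with hLdef
  have hB : ∑ j, ℓ j * Real.log (ℓ j / ((m : ℝ) * g + S)) = S * L := by
    have e1 : ∀ j ∈ Finset.univ, ℓ j * Real.log (ℓ j / ((m : ℝ) * g + S))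
        = ℓ j * Real.log (ℓ j) - ℓ j * Real.log ((m : ℝ) * g + S) := by
      intro j _
      rw [Real.log_div (hℓ j).ne' hTspos.ne']
      ring
    rw [Finset.sum_congr rfl e1, Finset.sum_sub_distrib, hA, ← Finset.sum_mul, ← hSdef,
      hLdef, Real.log_div hg.ne' hTspos.ne']
    ring
  -- cross entropy equals -L
  have hcross : -∑ i, p i * Real.log (q i) = -L := by
    have e1 : ∀ i ∈ Finset.univ, p i * Real.log (q i)
        = (Sum.elim x ℓ i * Real.log (q i)) / (X + S) := by
      intro i _
      rw [hpdef]
      ring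
    rw [Finset.sum_congr rfl e1, ← Finset.sum_div]
    have e2 : ∑ i, Sum.elim x ℓ i * Real.log (q i)
        = ∑ a : Fin m, x a * L + ∑ b : Fin k, ℓ b * Real.log (ℓ b / ((m : ℝ) * g + S)) := by
      rw [Fintype.sum_sum_type]
      simp [hqdef, hLdef]
    rw [e2, hB, ← Finset.sum_mul, ← hXdef]
    field_simp
  -- RHS equals -L
  have hRHS : pentropy (Sum.elim (fun _ : Fin m => g) ℓ) = -L := by
    simp only [pentropy, hTs]
    have e1 : ∀ i ∈ Finset.univ,
        Sum.elim (fun _ : Fin m => g) ℓ i / ((m : ℝ) * g + S)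
          * Real.log (Sum.elim (fun _ : Fin m => g) ℓ i / ((m : ℝ) * g + S))
        = (Sum.elim (fun _ : Fin m => g) ℓ i
            * Real.log (Sum.elim (fun _ : Fin m => g) ℓ i / ((m : ℝ) * g + S)))
            / ((m : ℝ) * g + S) := by
      intro i _
      ring
    rw [Finset.sum_congr rfl e1, ← Finset.sum_div]
    have e2 : ∑ i, Sum.elim (fun _ : Fin m => g) ℓ i
        * Real.log (Sum.elim (fun _ : Fin m => g) ℓ i / ((m : ℝ) * g + S))
        = ∑ _a : Fin m, g * L + ∑ b : Fin k, ℓ b * Real.log (ℓ b / ((m : ℝ) * g + S)) := by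
      rw [Fintype.sum_sum_type]
      simp [hLdef]
    rw [e2, hB]
    simp only [Finset.sum_const, Finset.card_univ, Fintype.card_fin, nsmul_eq_mul]
    field_simp
  rw [hLHS, hRHS, ← hcross]
  exact gibbs p q hppos hqpos hps hqs hpq
end
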